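/- arXiv:2012.00062 — 3 statements merged into one kernel-verified Lean document; each statement's English description precedes it below -/
import Mathlib

section
/- For |q|<1, the identity \sum_{n=0}^\infty (n + E_1^{(n)}(q)) / ((q;q)_n (q^{-1};q^{-1})_n) = 0 holds, where (q;q)_n = \prod_{j=1}^n (1-q^j) and (q^{-1};q^{-1})_n = \prod_{j=1}^n (1-q^{-j}). -/
set_option maxHeartbeats 1000000

/-- `E₁⁽ⁿ⁾(q) = ∑_{s≥1} q^{s(n+1)}/(1-q^s)`. -/
noncomputable def E1 (q : ℂ) (n : ℕ) : ℂ :=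
  ∑' s : ℕ, q ^ ((s + 1) * (n + 1)) / (1 - q ^ (s + 1))

/-- The finite q-Pochhammer symbol `(q;q)_n = ∏_{j=1}^n (1-q^j)`. -/
noncomputable def qPoch (q : ℂ) (n : ℕ) : ℂ :=
  ∏ j ∈ Finset.range n, (1 - q ^ (j + 1))

namespace StmtAux

open Finset Filter

/-- triangular numbers -/
def tri : ℕ → ℕ
  | 0 => 0
  | n + 1 => tri n + n

lemma tri_add (a b : ℕ) : tri (a + b) = tri a + tri b + a * b := by
  induction a with
  | zero => simp [tri]
  | succ n ih =>
      have : n + 1 + b = (n + b) + 1 := by omega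
      rw [this, tri, ih, tri]
      ring

variable {q : ℂ}

lemma norm_pow_lt (hq : ‖q‖ < 1) (j : ℕ) : ‖q ^ (j+1)‖ < 1 := by
  rw [norm_pow]
  calc ‖q‖ ^ (j+1) ≤ ‖q‖ ^ 1 := by
        apply pow_le_pow_of_le_one (norm_nonneg q) hq.le; omega
    _ < 1 := by simpa using hq

lemma one_sub_pow_ne (hq : ‖q‖ < 1) (j : ℕ) : 1 - q ^ (j+1) ≠ 0 := by
  intro h
  have h1 : q ^ (j+1) = 1 := by linear_combination -h
  have := norm_pow_lt hq j
  rw [h1] at this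
  norm_num at this

lemma qPoch_succ (n : ℕ) : qPoch q (n+1) = qPoch q n * (1 - q ^ (n+1)) := by
  rw [qPoch, qPoch, Finset.prod_range_succ]

lemma qPoch_ne_zero (hq : ‖q‖ < 1) (n : ℕ) : qPoch q n ≠ 0 :=
  Finset.prod_ne_zero_iff.2 fun j _ => one_sub_pow_ne hq j

lemma qPoch_inv_ne_zero (hq0 : q ≠ 0) (hq : ‖q‖ < 1) (n : ℕ) : qPoch q⁻¹ n ≠ 0 := by
  apply Finset.prod_ne_zero_iff.2
  intro j _
  intro h
  have h1 : (q⁻¹) ^ (j+1) = 1 := by linear_combination -h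
  have : q ^ (j+1) = 1 := by
    have := congrArg (· * q ^ (j+1)) h1
    field_simp at this
    simpa [eq_comm] using this
  exact one_sub_pow_ne hq j (by rw [this]; ring)

/-- `(q⁻¹;q⁻¹)_n = (-1)^n q^{-tri(n+1)} (q;q)_n` -/
lemma qPoch_inv (hq0 : q ≠ 0) (n : ℕ) :
    qPoch q⁻¹ n * q ^ (tri (n+1)) = (-1) ^ n * qPoch q n := by
  induction n with
  | zero => simp [qPoch, tri]
  | succ n ih =>
      have htri : tri (n+2) = tri (n+1) + (n+1) := rfl
      rw [qPoch_succ, qPoch_succ, htri,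
        show q ^ (tri (n+1) + (n+1)) = q ^ tri (n+1) * q^(n+1) from pow_add q _ _]
      have hinv : (1 - (q⁻¹) ^ (n+1)) * q ^ (n+1) = -(1 - q^(n+1)) := by
        rw [inv_pow, sub_mul, inv_mul_cancel₀ (pow_ne_zero _ hq0)]; ring
      calc qPoch q⁻¹ n * (1 - q⁻¹ ^ (n + 1)) * (q ^ tri (n + 1) * q ^ (n + 1))
          = (qPoch q⁻¹ n * q ^ tri (n+1)) * ((1 - q⁻¹ ^ (n + 1)) * q ^ (n+1)) := by ring
        _ = ((-1)^n * qPoch q n) * (-(1 - q^(n+1))) := by rw [ih, hinv]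
        _ = (-1)^n * -1 * (qPoch q n * (1 - q^(n+1))) := by ring


lemma exp_le_one_sub {t y : ℝ} (h0 : 0 ≤ y) (hyt : y ≤ t) (ht : t < 1) :
    Real.exp (-(y/(1-t))) ≤ 1 - y := by
  have h1t : 0 < 1 - t := by linarith
  have h1y : 0 < 1 - y := by linarith
  set u := y/(1-t) with hu
  have hu0 : 0 ≤ u := div_nonneg h0 h1t.le
  have huy : u * (1-t) = y := by rw [hu]; field_simp
  have h2 : u + 1 ≤ Real.exp u := Real.add_one_le_exp u
  have h3 : 1 ≤ (1-y) * Real.exp u := by nlinarith [mul_le_mul_of_nonneg_left h2 h1y.le]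
  rw [Real.exp_neg]
  have hepos := Real.exp_pos u
  rw [inv_le_comm₀ hepos h1y]
  rw [inv_le_iff_one_le_mul₀ h1y] at *
  linarith [h3]

lemma sum_geom_le {t : ℝ} (h0 : 0 ≤ t) (ht : t < 1) (s : Finset ℕ) :
    ∑ j ∈ s, t ^ (j+1) ≤ t / (1-t) := by
  have hsum : Summable (fun j : ℕ => t ^ (j+1)) := by
    simpa [pow_succ'] using (summable_geometric_of_lt_one h0 ht).mul_left t
  calc ∑ j ∈ s, t ^ (j+1) ≤ ∑' j : ℕ, t ^ (j+1) :=
        Summable.sum_le_tsum s (fun i _ => by positivity) hsum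
    _ = t * ∑' j : ℕ, t ^ j := by rw [← tsum_mul_left]; congr 1; ext j; rw [pow_succ']
    _ = t * (1-t)⁻¹ := by rw [tsum_geometric_of_lt_one h0 ht]
    _ = t / (1-t) := by ring

variable {q : ℂ}

/-- uniform lower bound for `‖qPoch q n‖`. -/
lemma qPoch_norm_ge (hq : ‖q‖ < 1) (n : ℕ) :
    Real.exp (-(‖q‖/((1-‖q‖)*(1-‖q‖)))) ≤ ‖qPoch q n‖ := by
  set t := ‖q‖ with htdef
  have h0 : 0 ≤ t := norm_nonneg q
  have h1t : 0 < 1 - t := by linarith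
  have step1 : ∀ j : ℕ, (1 : ℝ) - t^(j+1) ≤ ‖1 - q^(j+1)‖ := by
    intro j
    calc (1:ℝ) - t^(j+1) = ‖(1:ℂ)‖ - ‖q^(j+1)‖ := by simp [htdef]
      _ ≤ ‖1 - q^(j+1)‖ := norm_sub_norm_le _ _
  have step2 : ∀ j : ℕ, Real.exp (-(t^(j+1)/(1-t))) ≤ 1 - t^(j+1) := by
    intro j
    apply exp_le_one_sub (by positivity) _ hq
    calc t^(j+1) ≤ t^1 := pow_le_pow_of_le_one h0 hq.le (by omega)
      _ = t := pow_one t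
  have hprod : ‖qPoch q n‖ = ∏ j ∈ range n, ‖1 - q^(j+1)‖ := by
    rw [qPoch]; exact norm_prod _ _
  calc Real.exp (-(t/((1-t)*(1-t))))
      ≤ Real.exp (∑ j ∈ range n, -(t^(j+1)/(1-t))) := by
        apply Real.exp_le_exp.2
        have hs := sum_geom_le h0 hq (range n)
        have heq : (∑ j ∈ range n, -(t ^ (j + 1) / (1 - t)))
            = -((∑ j ∈ range n, t^(j+1)) / (1-t)) := by
          simp [Finset.sum_div, neg_div]
        rw [heq, neg_le_neg_iff]
        calc (∑ j ∈ range n, t^(j+1)) / (1-t) ≤ (t/(1-t))/(1-t) := by gcongr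
          _ = t/((1-t)*(1-t)) := by rw [div_div]
    _ = ∏ j ∈ range n, Real.exp (-(t^(j+1)/(1-t))) := by rw [Real.exp_sum]
    _ ≤ ∏ j ∈ range n, (1 - t^(j+1)) := by
        apply Finset.prod_le_prod (fun j _ => (Real.exp_pos _).le) (fun j _ => step2 j)
    _ ≤ ∏ j ∈ range n, ‖1 - q^(j+1)‖ := by
        apply Finset.prod_le_prod
        · intro j _
          have := step2 j
          have := (Real.exp_pos (-(t^(j+1)/(1-t)))).le
          linarith
        · exact fun j _ => step1 j
    _ = ‖qPoch q n‖ := hprod.symm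


noncomputable def ec (q : ℂ) (m : ℕ) : ℂ := (-1)^m * q^(tri m) / qPoch q m

noncomputable def EE (q : ℂ) (k : ℕ) : ℂ := ∑' m : ℕ, ec q m * q^(m*k)

noncomputable def DD (q : ℂ) (k : ℕ) : ℂ := ∑' m : ℕ, (m:ℂ) * ec q m * q^(m*k)

noncomputable def Bq (q : ℂ) : ℝ := Real.exp (‖q‖/((1-‖q‖)*(1-‖q‖)))

lemma Bq_pos (q : ℂ) : 0 < Bq q := Real.exp_pos _

lemma ec_norm_le (hq : ‖q‖ < 1) (m : ℕ) : ‖ec q m‖ ≤ Bq q * ‖q‖^(tri m) := by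
  have h1 := qPoch_norm_ge hq m
  have h2 : (0:ℝ) < Real.exp (-(‖q‖/((1-‖q‖)*(1-‖q‖)))) := Real.exp_pos _
  have h3 : (0:ℝ) < ‖qPoch q m‖ := lt_of_lt_of_le h2 h1
  have h4 : ‖ec q m‖ = ‖q‖^(tri m) / ‖qPoch q m‖ := by
    rw [ec, norm_div, norm_mul, norm_pow, norm_pow]
    simp
  rw [h4, div_le_iff₀ h3, Bq]
  calc ‖q‖ ^ tri m = ‖q‖^(tri m) * 1 := (mul_one _).symm
    _ ≤ ‖q‖^(tri m) * (Real.exp (‖q‖/((1-‖q‖)*(1-‖q‖))) * ‖qPoch q m‖) := by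
        apply mul_le_mul_of_nonneg_left _ (by positivity)
        calc (1:ℝ) = Real.exp (‖q‖/((1-‖q‖)*(1-‖q‖))) * Real.exp (-(‖q‖/((1-‖q‖)*(1-‖q‖)))) := by
              rw [← Real.exp_add]; simp
          _ ≤ Real.exp (‖q‖/((1-‖q‖)*(1-‖q‖))) * ‖qPoch q m‖ :=
              mul_le_mul_of_nonneg_left h1 (Real.exp_pos _).le
    _ = Real.exp (‖q‖/((1-‖q‖)*(1-‖q‖))) * ‖q‖^(tri m) * ‖qPoch q m‖ := by ring

lemma term_norm_le (hq : ‖q‖ < 1) {k : ℕ} (hk : 1 ≤ k) (m : ℕ) :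
    ‖ec q m * q^(m*k)‖ ≤ Bq q * ‖q‖^m := by
  have h0 : (0:ℝ) ≤ ‖q‖ := norm_nonneg q
  calc ‖ec q m * q^(m*k)‖ = ‖ec q m‖ * ‖q‖^(m*k) := by rw [norm_mul, norm_pow]
    _ ≤ (Bq q * ‖q‖^(tri m)) * ‖q‖^(m*k) := by
        apply mul_le_mul_of_nonneg_right (ec_norm_le hq m) (by positivity)
    _ = Bq q * ‖q‖^(tri m + m*k) := by rw [pow_add]; ring
    _ ≤ Bq q * ‖q‖^m := by
        apply mul_le_mul_of_nonneg_left _ (Bq_pos q).le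
        apply pow_le_pow_of_le_one h0 hq.le
        calc m = m*1 := (mul_one m).symm
          _ ≤ m*k := Nat.mul_le_mul_left m hk
          _ ≤ tri m + m*k := Nat.le_add_left _ _

lemma summable_EE (hq : ‖q‖ < 1) {k : ℕ} (hk : 1 ≤ k) :
    Summable fun m : ℕ => ec q m * q^(m*k) := by
  apply Summable.of_norm_bounded
    (((summable_geometric_of_lt_one (norm_nonneg q) hq)).mul_left (Bq q))
    (term_norm_le hq hk)

lemma dterm_norm_le (hq : ‖q‖ < 1) {k : ℕ} (hk : 1 ≤ k) (m : ℕ) :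
    ‖(m:ℂ) * ec q m * q^(m*k)‖ ≤ Bq q * ((m:ℝ) * ‖q‖^m) := by
  calc ‖(m:ℂ) * ec q m * q^(m*k)‖ = (m:ℝ) * ‖ec q m * q^(m*k)‖ := by
        rw [mul_assoc, norm_mul]; simp
    _ ≤ (m:ℝ) * (Bq q * ‖q‖^m) := by
        apply mul_le_mul_of_nonneg_left (term_norm_le hq hk m) (Nat.cast_nonneg m)
    _ = Bq q * ((m:ℝ) * ‖q‖^m) := by ring

lemma summable_mul_geom (hq : ‖q‖ < 1) : Summable fun m : ℕ => (m:ℝ) * ‖q‖^m := by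
  simpa using summable_pow_mul_geometric_of_norm_lt_one 1 (r := ‖q‖) (by simpa using hq)

lemma summable_DD (hq : ‖q‖ < 1) {k : ℕ} (hk : 1 ≤ k) :
    Summable fun m : ℕ => (m:ℂ) * ec q m * q^(m*k) := by
  exact Summable.of_norm_bounded
    (((summable_mul_geom hq)).mul_left (Bq q)) (dterm_norm_le hq hk)

lemma ec_key (hq : ‖q‖ < 1) (j : ℕ) :
    ec q (j+1) * (1 - q^(j+1)) = -(ec q j * q^j) := by
  have h1 : qPoch q j ≠ 0 := qPoch_ne_zero hq j
  have h2 : (1 : ℂ) - q^(j+1) ≠ 0 := one_sub_pow_ne hq j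
  rw [ec, ec, qPoch_succ, show tri (j+1) = tri j + j from rfl, pow_add, pow_succ]
  field_simp
  ring

lemma EE_rec (hq : ‖q‖ < 1) {k : ℕ} (hk : 1 ≤ k) :
    EE q k = (1 - q^k) * EE q (k+1) := by
  have hs1 : Summable fun m : ℕ => ec q m * q^(m*k) := summable_EE hq hk
  have hs2 : Summable fun m : ℕ => ec q m * q^(m*(k+1)) := summable_EE hq (by omega)
  set g : ℕ → ℂ := fun m => ec q m * q^(m*k) - ec q m * q^(m*(k+1)) with hg
  have hgs : Summable g := hs1.sub hs2
  have h0 : g 0 = 0 := by simp [hg]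
  have hshift : ∀ j : ℕ, g (j+1) = (-q^k) * (ec q j * q^(j*(k+1))) := by
    intro j
    have e1 : (j+1)*(k+1) = (j+1)*k + (j+1) := by ring
    have e2 : j + (j+1)*k = j*(k+1) + k := by ring
    calc g (j+1) = (ec q (j+1) * (1 - q^(j+1))) * q^((j+1)*k) := by
          rw [hg]; simp only []; rw [e1, pow_add]; ring
      _ = -(ec q j * q^j) * q^((j+1)*k) := by rw [ec_key hq j]
      _ = -(ec q j * q^(j + (j+1)*k)) := by rw [pow_add]; ring
      _ = (-q^k) * (ec q j * q^(j*(k+1))) := by rw [e2, pow_add]; ring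
  have key : EE q k - EE q (k+1) = (-q^k) * EE q (k+1) := by
    calc EE q k - EE q (k+1) = ∑' m, g m := (Summable.tsum_sub hs1 hs2).symm
      _ = g 0 + ∑' j, g (j+1) := Summable.tsum_eq_zero_add hgs
      _ = ∑' j, (-q^k) * (ec q j * q^(j*(k+1))) := by
          rw [h0, zero_add]; exact tsum_congr hshift
      _ = (-q^k) * EE q (k+1) := by rw [tsum_mul_left]; rfl
  linear_combination key

lemma DD_rec (hq : ‖q‖ < 1) {k : ℕ} (hk : 1 ≤ k) :
    DD q k = (1 - q^k) * DD q (k+1) - q^k * EE q (k+1) := by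
  have hs1 : Summable fun m : ℕ => (m:ℂ) * ec q m * q^(m*k) := summable_DD hq hk
  have hs2 : Summable fun m : ℕ => (m:ℂ) * ec q m * q^(m*(k+1)) := summable_DD hq (by omega)
  have hsE : Summable fun m : ℕ => ec q m * q^(m*(k+1)) := summable_EE hq (by omega)
  set g : ℕ → ℂ := fun m => (m:ℂ) * ec q m * q^(m*k) - (m:ℂ) * ec q m * q^(m*(k+1)) with hg
  have hgs : Summable g := hs1.sub hs2
  have h0 : g 0 = 0 := by simp [hg]
  have hshift : ∀ j : ℕ, g (j+1) =
      (-q^k) * ((j:ℂ) * ec q j * q^(j*(k+1))) + (-q^k) * (ec q j * q^(j*(k+1))) := by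
    intro j
    have e1 : (j+1)*(k+1) = (j+1)*k + (j+1) := by ring
    have e2 : j + (j+1)*k = j*(k+1) + k := by ring
    have cast1 : ((j:ℂ)+1) = (((j+1 : ℕ)):ℂ) := by push_cast; ring
    calc g (j+1) = ((j:ℂ)+1) * ((ec q (j+1) * (1 - q^(j+1))) * q^((j+1)*k)) := by
          rw [hg]; simp only []; rw [e1, pow_add, ← cast1]; ring
      _ = ((j:ℂ)+1) * (-(ec q j * q^j) * q^((j+1)*k)) := by rw [ec_key hq j]
      _ = ((j:ℂ)+1) * (-(ec q j * q^(j + (j+1)*k))) := by rw [pow_add]; ring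
      _ = ((j:ℂ)+1) * ((-q^k) * (ec q j * q^(j*(k+1)))) := by rw [e2, pow_add]; ring
      _ = (-q^k) * ((j:ℂ) * ec q j * q^(j*(k+1))) + (-q^k) * (ec q j * q^(j*(k+1))) := by ring
  have key : DD q k - DD q (k+1) = (-q^k) * DD q (k+1) + (-q^k) * EE q (k+1) := by
    calc DD q k - DD q (k+1) = ∑' m, g m := (Summable.tsum_sub hs1 hs2).symm
      _ = g 0 + ∑' j, g (j+1) := Summable.tsum_eq_zero_add hgs
      _ = ∑' j : ℕ, ((-q^k) * ((j:ℂ) * ec q j * q^(j*(k+1))) + (-q^k) * (ec q j * q^(j*(k+1)))) := by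
          rw [h0, zero_add]; exact tsum_congr hshift
      _ = (-q^k) * DD q (k+1) + (-q^k) * EE q (k+1) := by
          rw [Summable.tsum_add (hs2.mul_left _) (hsE.mul_left _), tsum_mul_left, tsum_mul_left]; rfl
  linear_combination key

lemma one_sub_norm_ge (hq : ‖q‖ < 1) (s : ℕ) : 1 - ‖q‖ ≤ ‖1 - q^(s+1)‖ := by
  have h0 : (0:ℝ) ≤ ‖q‖ := norm_nonneg q
  calc 1 - ‖q‖ ≤ 1 - ‖q‖^(s+1) := by
        have h5 : ‖q‖^(s+1) ≤ ‖q‖ := by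
          calc ‖q‖^(s+1) ≤ ‖q‖^1 := pow_le_pow_of_le_one h0 hq.le (by omega)
            _ = ‖q‖ := pow_one _
        linarith
    _ = ‖(1:ℂ)‖ - ‖q^(s+1)‖ := by simp
    _ ≤ ‖1 - q^(s+1)‖ := norm_sub_norm_le _ _

lemma summable_E1 (hq : ‖q‖ < 1) (n : ℕ) :
    Summable fun s : ℕ => q ^ ((s + 1) * (n + 1)) / (1 - q ^ (s + 1)) := by
  have h1t : (0:ℝ) < 1 - ‖q‖ := by linarith
  have hgeo : Summable (fun s : ℕ => (‖q‖ * ‖q‖^s) / (1-‖q‖)) :=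
    (((summable_geometric_of_lt_one (norm_nonneg q) hq).mul_left ‖q‖).div_const _)
  apply Summable.of_norm_bounded hgeo
  intro s
  rw [norm_div]
  have hd := one_sub_norm_ge hq s
  have hnum : ‖q ^ ((s+1)*(n+1))‖ ≤ ‖q‖ * ‖q‖^s := by
    rw [norm_pow, ← pow_succ']
    exact pow_le_pow_of_le_one (norm_nonneg q) hq.le (by nlinarith)
  exact div_le_div₀ (by positivity) hnum h1t hd

lemma E1_rec (hq : ‖q‖ < 1) (n : ℕ) :
    E1 q n = E1 q (n+1) + q^(n+1) * (1 - q^(n+1))⁻¹ := by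
  have hs1 := summable_E1 hq n
  have hs2 := summable_E1 hq (n+1)
  have hx : ‖q^(n+1)‖ < 1 := norm_pow_lt hq n
  have key : ∀ s : ℕ, q^((s+1)*(n+1))/(1-q^(s+1)) - q^((s+1)*(n+1+1))/(1-q^(s+1))
      = q^(n+1) * (q^(n+1))^s := by
    intro s
    have h2 := one_sub_pow_ne hq s
    have e1 : (s+1)*(n+2) = (s+1)*(n+1) + (s+1) := by ring
    have e2 : (s+1)*(n+1) = (n+1) + (n+1)*s := by ring
    rw [show n+1+1 = n+2 from rfl, div_sub_div_same, div_eq_iff h2, e1,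
      show q^((s+1)*(n+1) + (s+1)) = q^((s+1)*(n+1)) * q^(s+1) from pow_add q _ _,
      e2, show q^((n+1)+(n+1)*s) = q^(n+1) * q^((n+1)*s) from pow_add q _ _, ← pow_mul]
    ring
  have hgeo : ∑' s : ℕ, q^(n+1) * (q^(n+1))^s = q^(n+1) * (1 - q^(n+1))⁻¹ := by
    rw [tsum_mul_left, tsum_geometric_of_norm_lt_one hx]
  have : E1 q n - E1 q (n+1) = q^(n+1) * (1 - q^(n+1))⁻¹ := by
    rw [E1, E1, ← Summable.tsum_sub hs1 hs2, ← hgeo]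
    exact tsum_congr key
  linear_combination this

lemma ec_norm_le' (hq : ‖q‖ < 1) (m : ℕ) : ‖ec q m‖ ≤ Bq q := by
  calc ‖ec q m‖ ≤ Bq q * ‖q‖^(tri m) := ec_norm_le hq m
    _ ≤ Bq q * 1 := by
        apply mul_le_mul_of_nonneg_left _ (Bq_pos q).le
        exact pow_le_one₀ (norm_nonneg q) hq.le
    _ = Bq q := mul_one _

noncomputable def Ct (q : ℂ) : ℝ := ∑' m : ℕ, (m:ℝ) * ‖q‖^m

lemma E1_norm_le (hq : ‖q‖ < 1) (n : ℕ) :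
    ‖E1 q n‖ ≤ ((1-‖q‖)⁻¹ * (1-‖q‖)⁻¹) * ‖q‖^(n+1) := by
  set t := ‖q‖ with ht
  have h0 : (0:ℝ) ≤ t := norm_nonneg q
  have h1t : (0:ℝ) < 1 - t := by linarith
  have hterm : ∀ s : ℕ, ‖q^((s+1)*(n+1))/(1-q^(s+1))‖ ≤ ((1-t)⁻¹ * t^(n+1)) * t^s := by
    intro s
    rw [norm_div, norm_pow]
    calc t^((s+1)*(n+1)) / ‖1-q^(s+1)‖ ≤ t^((n+1)+s) / (1-t) := by
          apply div_le_div₀ (by positivity) _ h1t (one_sub_norm_ge hq s)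
          apply pow_le_pow_of_le_one h0 hq.le (by nlinarith)
      _ = ((1-t)⁻¹ * t^(n+1)) * t^s := by rw [pow_add]; ring
  have hsumg : Summable (fun s : ℕ => ((1-t)⁻¹ * t^(n+1)) * t^s) :=
    (summable_geometric_of_lt_one h0 hq).mul_left _
  have hnorms : Summable (fun s : ℕ => ‖q^((s+1)*(n+1))/(1-q^(s+1))‖) :=
    Summable.of_nonneg_of_le (fun s => norm_nonneg _) hterm hsumg
  calc ‖E1 q n‖ ≤ ∑' s : ℕ, ‖q^((s+1)*(n+1))/(1-q^(s+1))‖ := norm_tsum_le_tsum_norm hnorms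
    _ ≤ ∑' s : ℕ, ((1-t)⁻¹ * t^(n+1)) * t^s := Summable.tsum_le_tsum hterm hnorms hsumg
    _ = ((1-t)⁻¹ * t^(n+1)) * (1-t)⁻¹ := by
        rw [tsum_mul_left, tsum_geometric_of_lt_one h0 hq]
    _ = ((1-t)⁻¹ * (1-t)⁻¹) * t^(n+1) := by ring

lemma EE_norm_le (hq : ‖q‖ < 1) {k : ℕ} (hk : 1 ≤ k) :
    ‖EE q k‖ ≤ Bq q * (1-‖q‖)⁻¹ := by
  set t := ‖q‖ with ht
  have h0 : (0:ℝ) ≤ t := norm_nonneg q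
  have hsumg : Summable (fun m : ℕ => Bq q * t^m) :=
    (summable_geometric_of_lt_one h0 hq).mul_left _
  have hnorms : Summable (fun m : ℕ => ‖ec q m * q^(m*k)‖) :=
    Summable.of_nonneg_of_le (fun m => norm_nonneg _) (term_norm_le hq hk) hsumg
  calc ‖EE q k‖ ≤ ∑' m : ℕ, ‖ec q m * q^(m*k)‖ := norm_tsum_le_tsum_norm hnorms
    _ ≤ ∑' m : ℕ, Bq q * t^m := Summable.tsum_le_tsum (term_norm_le hq hk) hnorms hsumg
    _ = Bq q * (1-t)⁻¹ := by rw [tsum_mul_left, tsum_geometric_of_lt_one h0 hq]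

lemma DD_norm_le (hq : ‖q‖ < 1) (N : ℕ) :
    ‖DD q (N+1)‖ ≤ (Bq q * Ct q) * ‖q‖^N := by
  set t := ‖q‖ with ht
  have h0 : (0:ℝ) ≤ t := norm_nonneg q
  have hterm : ∀ m : ℕ, ‖(m:ℂ) * ec q m * q^(m*(N+1))‖ ≤ (Bq q * t^N) * ((m:ℝ)*t^m) := by
    intro m
    match m with
    | 0 => simp
    | (j+1) =>
      have hle : N + (j+1) ≤ (j+1)*(N+1) := by nlinarith
      calc ‖((j+1:ℕ):ℂ) * ec q (j+1) * q^((j+1)*(N+1))‖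
          = ((j+1:ℕ):ℝ) * (‖ec q (j+1)‖ * t^((j+1)*(N+1))) := by
            rw [norm_mul, norm_mul, norm_pow, Complex.norm_natCast]; ring
        _ ≤ ((j+1:ℕ):ℝ) * (Bq q * t^(N+(j+1))) := by
            apply mul_le_mul_of_nonneg_left _ (by positivity)
            apply mul_le_mul (ec_norm_le' hq _) (pow_le_pow_of_le_one h0 hq.le hle)
              (by positivity) (Bq_pos q).le
        _ = (Bq q * t^N) * (((j+1:ℕ):ℝ)*t^(j+1)) := by rw [pow_add]; ring
  have hsumg : Summable (fun m : ℕ => (Bq q * t^N) * ((m:ℝ)*t^m)) :=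
    (summable_mul_geom hq).mul_left _
  have hnorms : Summable (fun m : ℕ => ‖(m:ℂ) * ec q m * q^(m*(N+1))‖) :=
    Summable.of_nonneg_of_le (fun m => norm_nonneg _) hterm hsumg
  calc ‖DD q (N+1)‖ ≤ ∑' m : ℕ, ‖(m:ℂ) * ec q m * q^(m*(N+1))‖ := norm_tsum_le_tsum_norm hnorms
    _ ≤ ∑' m : ℕ, (Bq q * t^N) * ((m:ℝ)*t^m) := Summable.tsum_le_tsum hterm hnorms hsumg
    _ = (Bq q * t^N) * Ct q := by rw [tsum_mul_left]; rfl
    _ = (Bq q * Ct q) * t^N := by ring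

/-- the remainder whose vanishing is the key analytic fact -/
noncomputable def Rr (q : ℂ) (n : ℕ) : ℂ := DD q (n+1) + E1 q n * EE q (n+1)

lemma Rr_rec (hq : ‖q‖ < 1) (n : ℕ) : Rr q n = (1 - q^(n+1)) * Rr q (n+1) := by
  have h2 := one_sub_pow_ne hq n
  rw [Rr, Rr, DD_rec hq (k := n+1) (by omega), EE_rec hq (k := n+1) (by omega), E1_rec hq n]
  field_simp
  ring

lemma Rr_prod (hq : ‖q‖ < 1) (n N : ℕ) (h : n ≤ N) :
    Rr q n = (∏ j ∈ Finset.Ico n N, (1 - q^(j+1))) * Rr q N := by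
  induction N, h using Nat.le_induction with
  | base => simp
  | succ N hnN ih =>
      rw [ih, Rr_rec hq N, Finset.prod_Ico_succ_top hnN]
      ring

lemma Rr_eq_zero (hq : ‖q‖ < 1) (n : ℕ) : Rr q n = 0 := by
  set t := ‖q‖ with ht
  have h0 : (0:ℝ) ≤ t := norm_nonneg q
  have h1t : (0:ℝ) < 1 - t := by linarith
  set A : ℝ := Real.exp (t/(1-t)) with hA
  have hprodle : ∀ N : ℕ, ‖∏ j ∈ Finset.Ico n N, (1 - q^(j+1))‖ ≤ A := by
    intro N
    calc ‖∏ j ∈ Finset.Ico n N, (1 - q^(j+1))‖ = ∏ j ∈ Finset.Ico n N, ‖1 - q^(j+1)‖ :=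
          norm_prod _ _
      _ ≤ ∏ j ∈ Finset.Ico n N, Real.exp (t^(j+1)) := by
          apply Finset.prod_le_prod (fun j _ => norm_nonneg _)
          intro j _
          calc ‖1 - q^(j+1)‖ ≤ ‖(1:ℂ)‖ + ‖q^(j+1)‖ := norm_sub_le _ _
            _ = 1 + t^(j+1) := by rw [norm_one, norm_pow]
            _ ≤ Real.exp (t^(j+1)) := by linarith [Real.add_one_le_exp (t^(j+1))]
      _ = Real.exp (∑ j ∈ Finset.Ico n N, t^(j+1)) := (Real.exp_sum _ _).symm
      _ ≤ A := Real.exp_le_exp.2 (sum_geom_le h0 hq _)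
  set K : ℝ := Bq q * Ct q + ((1-t)⁻¹ * (1-t)⁻¹) * (Bq q * (1-t)⁻¹) with hK
  have hRbound : ∀ N : ℕ, ‖Rr q N‖ ≤ K * t^N := by
    intro N
    have h1 := DD_norm_le hq N
    have h2 := E1_norm_le hq N
    have h3 := EE_norm_le hq (k := N+1) (by omega)
    have h4 : ‖E1 q N * EE q (N+1)‖ ≤ (((1-t)⁻¹ * (1-t)⁻¹) * t^(N+1)) * (Bq q * (1-t)⁻¹) := by
      rw [norm_mul]
      have hi : (0:ℝ) ≤ (1-t)⁻¹ := (inv_pos.2 h1t).le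
      apply mul_le_mul h2 h3 (norm_nonneg _)
        (mul_nonneg (mul_nonneg hi hi) (pow_nonneg h0 _))
    have h5 : t^(N+1) ≤ t^N := pow_le_pow_of_le_one h0 hq.le (by omega)
    calc ‖Rr q N‖ ≤ ‖DD q (N+1)‖ + ‖E1 q N * EE q (N+1)‖ := norm_add_le _ _
      _ ≤ (Bq q * Ct q) * t^N + (((1-t)⁻¹ * (1-t)⁻¹) * t^(N+1)) * (Bq q * (1-t)⁻¹) := by
          linarith
      _ ≤ K * t^N := by
          rw [hK]
          have hi : (0:ℝ) ≤ (1-t)⁻¹ := (inv_pos.2 h1t).le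
          have hpos : (0:ℝ) ≤ ((1-t)⁻¹ * (1-t)⁻¹) * (Bq q * (1-t)⁻¹) :=
            mul_nonneg (mul_nonneg hi hi) (mul_nonneg (Bq_pos q).le hi)
          nlinarith [pow_nonneg h0 N]
  have hlim : Filter.Tendsto (fun N : ℕ => A * (K * t^N)) Filter.atTop (nhds 0) := by
    have := (tendsto_pow_atTop_nhds_zero_of_lt_one h0 hq).const_mul (A * K)
    simp only [mul_zero] at this
    apply this.congr
    intro N
    ring
  have hfinal : ‖Rr q n‖ ≤ 0 := by
    apply ge_of_tendsto hlim
    filter_upwards [Filter.eventually_ge_atTop n] with N hN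
    calc ‖Rr q n‖ = ‖∏ j ∈ Finset.Ico n N, (1 - q^(j+1))‖ * ‖Rr q N‖ := by
          rw [Rr_prod hq n N hN, norm_mul]
      _ ≤ A * ‖Rr q N‖ := mul_le_mul_of_nonneg_right (hprodle N) (norm_nonneg _)
      _ ≤ A * (K * t^N) := mul_le_mul_of_nonneg_left (hRbound N) (Real.exp_pos _).le
  have := le_antisymm hfinal (norm_nonneg _)
  exact norm_eq_zero.1 this

lemma EE_one_eq (hq : ‖q‖ < 1) (n : ℕ) : EE q 1 = qPoch q n * EE q (n+1) := by
  induction n with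
  | zero => simp [qPoch]
  | succ n ih => rw [ih, EE_rec hq (k := n+1) (by omega), qPoch_succ]; ring

lemma EE_sub_one (hq : ‖q‖ < 1) {k : ℕ} (hk : 1 ≤ k) :
    ‖EE q k - 1‖ ≤ (Bq q * (1-‖q‖)⁻¹) * ‖q‖^k := by
  set t := ‖q‖ with ht
  have h0 : (0:ℝ) ≤ t := norm_nonneg q
  have hs := summable_EE hq (q := q) hk
  have h0term : ec q 0 * q^(0*k) = 1 := by simp [ec, tri, qPoch]
  have hEk : EE q k - 1 = ∑' j : ℕ, ec q (j+1) * q^((j+1)*k) := by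
    rw [EE, Summable.tsum_eq_zero_add hs, h0term]; ring
  have hterm : ∀ j : ℕ, ‖ec q (j+1) * q^((j+1)*k)‖ ≤ (Bq q * t^k) * t^j := by
    intro j
    calc ‖ec q (j+1) * q^((j+1)*k)‖ = ‖ec q (j+1)‖ * t^((j+1)*k) := by rw [norm_mul, norm_pow]
      _ ≤ Bq q * t^(k+j) := by
          apply mul_le_mul (ec_norm_le' hq _) (pow_le_pow_of_le_one h0 hq.le (by nlinarith))
            (by positivity) (Bq_pos q).le
      _ = (Bq q * t^k) * t^j := by rw [pow_add]; ring
  have hsumg : Summable (fun j : ℕ => (Bq q * t^k) * t^j) :=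
    (summable_geometric_of_lt_one h0 hq).mul_left _
  have hnorms : Summable (fun j : ℕ => ‖ec q (j+1) * q^((j+1)*k)‖) :=
    Summable.of_nonneg_of_le (fun j => norm_nonneg _) hterm hsumg
  calc ‖EE q k - 1‖ = ‖∑' j : ℕ, ec q (j+1) * q^((j+1)*k)‖ := by rw [hEk]
    _ ≤ ∑' j : ℕ, ‖ec q (j+1) * q^((j+1)*k)‖ := norm_tsum_le_tsum_norm hnorms
    _ ≤ ∑' j : ℕ, (Bq q * t^k) * t^j := Summable.tsum_le_tsum hterm hnorms hsumg
    _ = (Bq q * t^k) * (1-t)⁻¹ := by rw [tsum_mul_left, tsum_geometric_of_lt_one h0 hq]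
    _ = (Bq q * (1-t)⁻¹) * t^k := by ring

lemma EE_one_ne_zero (hq : ‖q‖ < 1) : EE q 1 ≠ 0 := by
  set t := ‖q‖ with ht
  have h0 : (0:ℝ) ≤ t := norm_nonneg q
  have h1t : (0:ℝ) < 1 - t := by linarith
  set C : ℝ := Bq q * (1-t)⁻¹ with hC
  have hCpos : 0 < C := mul_pos (Bq_pos q) (inv_pos.2 h1t)
  obtain ⟨N, hN⟩ : ∃ N : ℕ, t^N < C⁻¹ := exists_pow_lt_of_lt_one (inv_pos.2 hCpos) hq
  have hlt : C * t^(N+1) < 1 := by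
    have h5 : t^(N+1) ≤ t^N := pow_le_pow_of_le_one h0 hq.le (by omega)
    have h6 : C * t^(N+1) ≤ C * t^N := mul_le_mul_of_nonneg_left h5 hCpos.le
    have h7 : C * t^N < C * C⁻¹ := mul_lt_mul_of_pos_left hN hCpos
    rw [mul_inv_cancel₀ hCpos.ne'] at h7
    linarith
  have hne : EE q (N+1) ≠ 0 := by
    intro h
    have := EE_sub_one hq (k := N+1) (by omega)
    rw [h] at this
    simp only [zero_sub, norm_neg, norm_one] at this
    rw [← hC] at this
    linarith
  rw [EE_one_eq hq N]
  exact mul_ne_zero (qPoch_ne_zero hq N) hne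

lemma stepA (hq : ‖q‖ < 1) (n : ℕ) :
    ((n:ℂ) + E1 q n) * EE q (n+1) = ∑' m : ℕ, ((n:ℂ) - m) * ec q m * q^(m*(n+1)) := by
  have hR := Rr_eq_zero hq n
  simp only [Rr] at hR
  have hsE : Summable fun m : ℕ => ec q m * q^(m*(n+1)) := summable_EE hq (by omega)
  have hsD : Summable fun m : ℕ => (m:ℂ) * ec q m * q^(m*(n+1)) := summable_DD hq (by omega)
  calc ((n:ℂ) + E1 q n) * EE q (n+1) = (n:ℂ) * EE q (n+1) - DD q (n+1) := by
        linear_combination hR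
    _ = ∑' m : ℕ, ((n:ℂ) * (ec q m * q^(m*(n+1)))) - ∑' m : ℕ, ((m:ℂ) * ec q m * q^(m*(n+1))) := by
        rw [tsum_mul_left]; rfl
    _ = ∑' m : ℕ, (((n:ℂ) * (ec q m * q^(m*(n+1)))) - ((m:ℂ) * ec q m * q^(m*(n+1)))) :=
        (Summable.tsum_sub (hsE.mul_left _) hsD).symm
    _ = ∑' m : ℕ, ((n:ℂ) - m) * ec q m * q^(m*(n+1)) := tsum_congr fun m => by ring

noncomputable def Fd (q : ℂ) (n m : ℕ) : ℂ :=
  ((n:ℂ) - m) * (-1)^(n+m) * q^(tri (n+m+1)) / (qPoch q n * qPoch q m)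

lemma qPoch_norm_inv_le (hq : ‖q‖ < 1) (n : ℕ) : ‖qPoch q n‖⁻¹ ≤ Bq q := by
  have h1 := qPoch_norm_ge hq n
  have h2 : (0:ℝ) < ‖qPoch q n‖ := lt_of_lt_of_le (Real.exp_pos _) h1
  rw [inv_le_comm₀ h2 (Bq_pos q), Bq, ← Real.exp_neg]
  exact h1

lemma le_tri (k : ℕ) : k ≤ tri (k+1) := by
  rw [show tri (k+1) = tri k + k from rfl]
  omega

lemma Fd_norm_le (hq : ‖q‖ < 1) (n m : ℕ) :
    ‖Fd q n m‖ ≤ (Bq q * (((n:ℝ)+1) * ‖q‖^n)) * (Bq q * (((m:ℝ)+1) * ‖q‖^m)) := by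
  set t := ‖q‖ with ht
  have h0 : (0:ℝ) ≤ t := norm_nonneg q
  have h1 : ‖Fd q n m‖
      = (‖(n:ℂ) - m‖ * t^(tri (n+m+1))) * (‖qPoch q n‖⁻¹ * ‖qPoch q m‖⁻¹) := by
    rw [Fd]
    simp only [norm_div, norm_mul, norm_pow, norm_neg, norm_one, one_pow, mul_one]
    ring
  have hnm : ‖(n:ℂ) - m‖ ≤ ((n:ℝ)+1) * ((m:ℝ)+1) := by
    calc ‖(n:ℂ) - m‖ ≤ ‖(n:ℂ)‖ + ‖(m:ℂ)‖ := norm_sub_le _ _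
      _ = (n:ℝ) + (m:ℝ) := by rw [Complex.norm_natCast, Complex.norm_natCast]
      _ ≤ ((n:ℝ)+1) * ((m:ℝ)+1) := by
          nlinarith [mul_nonneg (Nat.cast_nonneg (α := ℝ) n) (Nat.cast_nonneg (α := ℝ) m),
            Nat.cast_nonneg (α := ℝ) n, Nat.cast_nonneg (α := ℝ) m]
  have htri : t^(tri (n+m+1)) ≤ t^n * t^m := by
    rw [← pow_add]
    exact pow_le_pow_of_le_one h0 hq.le (le_tri (n+m))
  have hP : ‖qPoch q n‖⁻¹ * ‖qPoch q m‖⁻¹ ≤ Bq q * Bq q := by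
    apply mul_le_mul (qPoch_norm_inv_le hq n) (qPoch_norm_inv_le hq m)
      (by positivity) (Bq_pos q).le
  calc ‖Fd q n m‖ = (‖(n:ℂ) - m‖ * t^(tri (n+m+1))) * (‖qPoch q n‖⁻¹ * ‖qPoch q m‖⁻¹) := h1
    _ ≤ ((((n:ℝ)+1) * ((m:ℝ)+1)) * (t^n * t^m)) * (Bq q * Bq q) := by
        apply mul_le_mul _ hP (by positivity) _
        · exact mul_le_mul hnm htri (by positivity) (by positivity)
        · have := Bq_pos q; positivity
    _ = (Bq q * (((n:ℝ)+1) * t^n)) * (Bq q * (((m:ℝ)+1) * t^m)) := by ring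

lemma summable_row (hq : ‖q‖ < 1) : Summable (fun n : ℕ => Bq q * (((n:ℝ)+1) * ‖q‖^n)) := by
  apply Summable.mul_left
  have := (summable_mul_geom hq).add (summable_geometric_of_lt_one (norm_nonneg q) hq)
  apply this.congr
  intro n
  ring

lemma row_nonneg (hq : ‖q‖ < 1) (n : ℕ) : 0 ≤ Bq q * (((n:ℝ)+1) * ‖q‖^n) :=
  mul_nonneg (Bq_pos q).le (by positivity)

lemma summable_Fd (hq : ‖q‖ < 1) : Summable (fun p : ℕ × ℕ => Fd q p.1 p.2) := by
  have h1 := summable_row (q := q) hq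
  have hnn : (0 : ℕ → ℝ) ≤ fun n : ℕ => Bq q * (((n:ℝ)+1) * ‖q‖^n) := by
    intro n
    exact row_nonneg hq n
  have hG : Summable (fun p : ℕ × ℕ =>
      (Bq q * (((p.1:ℝ)+1) * ‖q‖^p.1)) * (Bq q * (((p.2:ℝ)+1) * ‖q‖^p.2))) :=
    Summable.mul_of_nonneg h1 h1 hnn hnn
  exact Summable.of_norm_bounded hG (fun p => Fd_norm_le hq p.1 p.2)

lemma summable_Fd_row (hq : ‖q‖ < 1) (n : ℕ) : Summable (fun m : ℕ => Fd q n m) := by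
  apply Summable.of_norm_bounded
    ((summable_row hq).mul_left _)
    (fun m => Fd_norm_le hq n m)

set_option maxHeartbeats 1000000 in
lemma stepB (hq0 : q ≠ 0) (hq : ‖q‖ < 1) (n : ℕ) :
    EE q 1 * (((n:ℂ) + E1 q n) / (qPoch q n * qPoch q⁻¹ n)) = ∑' m : ℕ, Fd q n m := by
  have hPn := qPoch_ne_zero hq n
  have hPin := qPoch_inv_ne_zero hq0 hq n
  have hc : q^(tri (n+1)) ≠ 0 := pow_ne_zero _ hq0
  have hPinEq : qPoch q⁻¹ n = (-1)^n * qPoch q n / q^(tri (n+1)) := by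
    rw [eq_div_iff hc]
    exact qPoch_inv hq0 n
  have hne : ((-1:ℂ))^n ≠ 0 := pow_ne_zero _ (by norm_num)
  calc EE q 1 * (((n:ℂ) + E1 q n) / (qPoch q n * qPoch q⁻¹ n))
      = (((n:ℂ) + E1 q n) * EE q (n+1)) * ((-1)^n * q^(tri (n+1)) / qPoch q n) := by
        rw [EE_one_eq hq n, hPinEq]
        have hsq : ((-1:ℂ))^n * (-1)^n = 1 := by
          rw [← pow_add, show n+n = 2*n by omega, pow_mul]
          norm_num
        field_simp
        linear_combination (-((↑n + E1 q n) * EE q (n+1))) * hsq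
    _ = (∑' m : ℕ, ((n:ℂ) - m) * ec q m * q^(m*(n+1))) * ((-1)^n * q^(tri (n+1)) / qPoch q n) := by
        rw [stepA hq n]
    _ = ∑' m : ℕ, (((n:ℂ) - m) * ec q m * q^(m*(n+1))) * ((-1)^n * q^(tri (n+1)) / qPoch q n) :=
        (tsum_mul_right).symm
    _ = ∑' m : ℕ, Fd q n m := by
        apply tsum_congr
        intro m
        have hqm := qPoch_ne_zero hq m
        have h2 : ((-1:ℂ))^(n+m) = (-1)^n * (-1)^m := pow_add _ _ _
        have h3 : (q:ℂ)^(tri (n+m+1)) = q^(tri m) * q^(m*(n+1)) * q^(tri (n+1)) := by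
          rw [← pow_add, ← pow_add]
          congr 1
          have h5 := tri_add m (n+1)
          rw [show m + (n+1) = n+m+1 by omega] at h5
          omega
        rw [Fd, h2, h3, ec]
        field_simp

theorem main (hq0 : q ≠ 0) (hq : ‖q‖ < 1) :
    ∑' n : ℕ, ((n : ℂ) + E1 q n) / (qPoch q n * qPoch q⁻¹ n) = 0 := by
  have hne := EE_one_ne_zero hq
  have key : EE q 1 * (∑' n : ℕ, ((n : ℂ) + E1 q n) / (qPoch q n * qPoch q⁻¹ n)) = 0 := by
    rw [← tsum_mul_left]
    calc ∑' n : ℕ, EE q 1 * (((n:ℂ) + E1 q n) / (qPoch q n * qPoch q⁻¹ n))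
        = ∑' n : ℕ, ∑' m : ℕ, Fd q n m := tsum_congr (stepB hq0 hq)
      _ = ∑' p : ℕ × ℕ, Fd q p.1 p.2 :=
          (Summable.tsum_prod' (summable_Fd hq) (summable_Fd_row hq)).symm
      _ = 0 := by
          have hanti : ∀ p : ℕ × ℕ, Fd q p.2 p.1 = -Fd q p.1 p.2 := by
            intro p
            rw [Fd, Fd, show p.2 + p.1 = p.1 + p.2 from Nat.add_comm _ _]
            ring
          have hswap := (Equiv.prodComm ℕ ℕ).tsum_eq (fun p : ℕ × ℕ => Fd q p.1 p.2)
          have hthis : -(∑' p : ℕ × ℕ, Fd q p.1 p.2) = ∑' p : ℕ × ℕ, Fd q p.1 p.2 := by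
            calc -(∑' p : ℕ × ℕ, Fd q p.1 p.2) = ∑' p : ℕ × ℕ, -(Fd q p.1 p.2) := by
                  rw [tsum_neg]
              _ = ∑' p : ℕ × ℕ, Fd q p.2 p.1 := tsum_congr fun p => (hanti p).symm
              _ = ∑' p : ℕ × ℕ, Fd q p.1 p.2 := hswap
          linear_combination (-1/2 : ℂ) * hthis
  exact (mul_eq_zero.1 key).resolve_left hne

end StmtAux

theorem stmt_1 (q : ℂ) (hq0 : q ≠ 0) (hq : ‖q‖ < 1) :
    ∑' n : ℕ, ((n : ℂ) + E1 q n) / (qPoch q n * qPoch q⁻¹ n) = 0 := by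
  exact StmtAux.main hq0 hq
end

section
/- Let G^0_m(q) = \sum_{n=0}^\infty (-1)^n q^{n(n+1)/2 + mn}/(q;q)_n^2 for |q|<1 and m \in \mathbb{Z}. Then G^0_m satisfies the linear q-difference equation G^0_{m+1}(q) - (2 - q^m) G^0_m(q) + G^0_{m-1}(q) = 0 for all m \in \mathbb{Z}. -/
/-- `G⁰_m(q) = ∑_{n≥0} (-1)^n q^{n(n+1)/2+mn}/(q;q)_n²`. -/
noncomputable def G0 (q : ℂ) (m : ℤ) : ℂ :=
  ∑' n : ℕ, (-1 : ℂ) ^ n * q ^ (n * (n + 1) / 2) * q ^ (m * (n : ℤ)) / (qPoch q n) ^ 2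

noncomputable def Aterm (q : ℂ) (m : ℤ) (n : ℕ) : ℂ :=
  (-1 : ℂ) ^ n * q ^ (n * (n + 1) / 2) * q ^ (m * (n : ℤ)) / (qPoch q n) ^ 2

lemma G0_eq (q : ℂ) (m : ℤ) : G0 q m = ∑' n : ℕ, Aterm q m n := rfl

lemma tri (k : ℕ) : (k + 1) * (k + 2) / 2 = k * (k + 1) / 2 + (k + 1) := by
  have h1 : 2 * (k * (k + 1) / 2) = k * (k + 1) := by
    rw [Nat.mul_div_cancel']
    exact (Nat.even_mul_succ_self k).two_dvd
  have h2 : 2 * ((k + 1) * (k + 2) / 2) = (k + 1) * (k + 2) := by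
    rw [Nat.mul_div_cancel']
    exact (Nat.even_mul_succ_self (k+1)).two_dvd
  have h3 : (k + 1) * (k + 2) = k * (k + 1) + 2 * (k + 1) := by ring
  omega

lemma one_sub_pow_ne (q : ℂ) (hq : ‖q‖ < 1) (j : ℕ) : 1 - q ^ (j + 1) ≠ 0 := by
  intro h
  have : q ^ (j + 1) = 1 := by linear_combination -h
  have h2 : ‖q ^ (j + 1)‖ < 1 := by
    rw [norm_pow]
    exact pow_lt_one₀ (norm_nonneg q) hq (Nat.succ_ne_zero j)
  rw [this, norm_one] at h2
  exact lt_irrefl 1 h2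

lemma qPoch_ne_zero (q : ℂ) (hq : ‖q‖ < 1) (n : ℕ) : qPoch q n ≠ 0 := by
  unfold qPoch
  exact Finset.prod_ne_zero_iff.mpr fun j _ => one_sub_pow_ne q hq j

lemma qPoch_succ (q : ℂ) (n : ℕ) : qPoch q (n + 1) = qPoch q n * (1 - q ^ (n + 1)) :=
  Finset.prod_range_succ _ _

lemma Aterm_rec (q : ℂ) (hq0 : q ≠ 0) (hq : ‖q‖ < 1) (m : ℤ) (k : ℕ) :
    Aterm q m (k + 1) = Aterm q m k * (-(q ^ m * q ^ (k + 1)) / (1 - q ^ (k + 1)) ^ 2) := by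
  unfold Aterm
  have h1 : ((k : ℕ) + 1) * (k + 2) / 2 = k * (k + 1) / 2 + (k + 1) := tri k
  have h2 : m * ((k : ℤ) + 1) = m * k + m := by ring
  have hp := qPoch_ne_zero q hq k
  have hs := one_sub_pow_ne q hq k
  push_cast
  rw [h1, h2, pow_add, zpow_add₀ hq0, qPoch_succ]
  field_simp
  ring

lemma Aterm_summable (q : ℂ) (hq0 : q ≠ 0) (hq : ‖q‖ < 1) (m : ℤ) :
    Summable (Aterm q m) := by
  apply summable_of_ratio_norm_eventually_le (r := 1/2) (by norm_num)
  have hq1 : (0:ℝ) < 1 - ‖q‖ := by linarith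
  have hten : Filter.Tendsto (fun n : ℕ => ‖q ^ m‖ * ‖q‖ ^ (n + 1)) Filter.atTop (nhds 0) := by
    have := tendsto_pow_atTop_nhds_zero_of_lt_one (norm_nonneg q) hq
    have := (this.comp (Filter.tendsto_add_atTop_nat 1)).const_mul (‖q ^ m‖)
    simpa using this
  have hev : ∀ᶠ n : ℕ in Filter.atTop,
      ‖q ^ m‖ * ‖q‖ ^ (n + 1) ≤ 1/2 * (1 - ‖q‖) ^ 2 := by
    have hpos : (0:ℝ) < 1/2 * (1 - ‖q‖) ^ 2 := by positivity
    exact hten.eventually_le_const hpos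
  filter_upwards [hev] with n hn
  rw [Aterm_rec q hq0 hq m n, norm_mul, mul_comm]
  apply mul_le_mul_of_nonneg_right _ (norm_nonneg _)
  rw [norm_div, norm_neg, norm_mul, norm_pow, norm_pow]
  have hd : 1 - ‖q‖ ≤ ‖1 - q ^ (n + 1)‖ := by
    have : ‖q ^ (n+1)‖ ≤ ‖q‖ := by
      rw [norm_pow]
      exact pow_le_of_le_one (norm_nonneg q) hq.le (Nat.succ_ne_zero n)
    calc 1 - ‖q‖ ≤ 1 - ‖q ^ (n+1)‖ := by linarith
    _ ≤ ‖1 - q ^ (n+1)‖ := by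
        have := norm_sub_norm_le (1 : ℂ) (q ^ (n+1))
        simpa using this
  rw [div_le_iff₀ (pow_pos (lt_of_lt_of_le hq1 hd) 2)]
  calc ‖q ^ m‖ * ‖q‖ ^ (n + 1) ≤ 1/2 * (1 - ‖q‖) ^ 2 := hn
    _ ≤ 1/2 * ‖1 - q ^ (n+1)‖ ^ 2 := by
        apply mul_le_mul_of_nonneg_left _ (by norm_num)
        exact pow_le_pow_left₀ hq1.le hd 2

theorem stmt_6 (q : ℂ) (hq0 : q ≠ 0) (hq : ‖q‖ < 1) (m : ℤ) :
    G0 q (m + 1) - (2 - q ^ m) * G0 q m + G0 q (m - 1) = 0 := by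
  have h1 := Aterm_summable q hq0 hq (m + 1)
  have h2 := Aterm_summable q hq0 hq m
  have h3 := Aterm_summable q hq0 hq (m - 1)
  set g : ℕ → ℂ := fun n => Aterm q m n * (1 - q ^ n) ^ 2 / q ^ n with hg
  have hg0 : g 0 = 0 := by simp [hg]
  have hgs : ∀ k : ℕ, g (k + 1) = -(q ^ m * Aterm q m k) := by
    intro k
    have hs := one_sub_pow_ne q hq k
    have hqn : q ^ (k + 1) ≠ 0 := pow_ne_zero _ hq0
    simp only [hg]
    rw [Aterm_rec q hq0 hq m k]
    field_simp
  have hgsum : Summable g := by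
    rw [← summable_nat_add_iff 1]
    apply Summable.congr ((h2.mul_left (q ^ m)).neg)
    intro k
    exact (hgs k).symm
  have hpoint : ∀ n : ℕ, Aterm q (m + 1) n - (2 - q ^ m) * Aterm q m n + Aterm q (m - 1) n
      = g n + q ^ m * Aterm q m n := by
    intro n
    have hp := qPoch_ne_zero q hq n
    have hqn : (q : ℂ) ^ n ≠ 0 := pow_ne_zero _ hq0
    simp only [hg]
    unfold Aterm
    have e1 : q ^ ((m + 1) * (n : ℤ)) = q ^ (m * (n : ℤ)) * q ^ n := by
      rw [← zpow_natCast q n, ← zpow_add₀ hq0]; ring_nf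
    have e2 : q ^ ((m - 1) * (n : ℤ)) = q ^ (m * (n : ℤ)) / q ^ n := by
      rw [← zpow_natCast q n, ← zpow_sub₀ hq0]; ring_nf
    rw [e1, e2]
    field_simp
    ring
  have key : ∑' n : ℕ, (Aterm q (m + 1) n - (2 - q ^ m) * Aterm q m n + Aterm q (m - 1) n) = 0 := by
    rw [tsum_congr hpoint, Summable.tsum_add hgsum (h2.mul_left _), Summable.tsum_eq_zero_add hgsum, hg0,
      tsum_congr hgs, tsum_neg, tsum_mul_left]
    ring
  calc G0 q (m + 1) - (2 - q ^ m) * G0 q m + G0 q (m - 1)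
      = ∑' n : ℕ, (Aterm q (m + 1) n - (2 - q ^ m) * Aterm q m n + Aterm q (m - 1) n) := by
        rw [G0_eq, G0_eq, G0_eq, ← tsum_mul_left, ← Summable.tsum_sub h1 (h2.mul_left _),
          ← Summable.tsum_add (h1.sub (h2.mul_left _)) h3]
    _ = 0 := key
end

section
/- For 0<|q|<1, the q-Hahn Bessel function satisfies the three-term recursion y J(qx, y; q) - (1 + y - x) J(x,y;q) + J(q^{-1}x, y; q) = 0, where J(x,y;q) = (qy;q)_\infty \sum_{n=0}^\infty (-1)^n q^{n(n+1)/2} x^n / ((q;q)_n (qy;q)_n). -/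
/-- `(a;q)_∞ = ∏_{j≥0}(1 - a q^j)`. -/
noncomputable def pinf (q a : ℂ) : ℂ := ∏' j : ℕ, (1 - a * q ^ j)

/-- `(a;q)_n = ∏_{j=0}^{n-1}(1 - a q^j)`. -/
noncomputable def pochN (q a : ℂ) (n : ℕ) : ℂ := ∏ j ∈ Finset.range n, (1 - a * q ^ j)

/-- The q-Hahn Bessel function `J(x,y;q)`. -/
noncomputable def Jq (q x y : ℂ) : ℂ :=
  pinf q (q * y) *
    ∑' n : ℕ, (-1 : ℂ) ^ n * q ^ (n * (n + 1) / 2) * x ^ n /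
      (pochN q q n * pochN q (q * y) n)

/-- The coefficients of the series defining `Jq`. -/
noncomputable def cJ (q y : ℂ) (n : ℕ) : ℂ :=
  (-1 : ℂ) ^ n * q ^ (n * (n + 1) / 2) / (pochN q q n * pochN q (q * y) n)

lemma triangle_step (n : ℕ) : (n + 1) * (n + 1 + 1) / 2 = n * (n + 1) / 2 + (n + 1) := by
  have := Nat.triangle_succ (n + 1)
  simpa [Nat.mul_comm, Nat.add_comm] using this

theorem stmt_11 (q y : ℂ) (h0 : 0 < ‖q‖) (h1 : ‖q‖ < 1)
    (hy : ∀ n : ℕ, y * q ^ (n + 1) ≠ 1) :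
    ∀ x : ℂ, y * Jq q (q * x) y - (1 + y - x) * Jq q x y + Jq q (q⁻¹ * x) y = 0 := by
  have hq0 : q ≠ 0 := by
    intro h; rw [h] at h0; simp at h0
  -- factors are nonzero
  have hA : ∀ j : ℕ, (1 : ℂ) - q * q ^ j ≠ 0 := by
    intro j h
    have : q * q ^ j = 1 := by linear_combination -h
    have hn : ‖q * q ^ j‖ = 1 := by rw [this, norm_one]
    rw [norm_mul, norm_pow] at hn
    have : ‖q‖ * ‖q‖ ^ j < 1 := by
      calc ‖q‖ * ‖q‖ ^ j ≤ ‖q‖ * 1 := by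
            exact mul_le_mul_of_nonneg_left (pow_le_one₀ (norm_nonneg q) h1.le) (norm_nonneg q)
        _ = ‖q‖ := by ring
        _ < 1 := h1
    rw [hn] at this; exact lt_irrefl 1 this
  have hB : ∀ j : ℕ, (1 : ℂ) - q * y * q ^ j ≠ 0 := by
    intro j h
    apply hy j
    have : q * y * q ^ j = 1 := by linear_combination -h
    calc y * q ^ (j + 1) = q * y * q ^ j := by ring
      _ = 1 := this
  have hP1 : ∀ n : ℕ, pochN q q n ≠ 0 := fun n =>
    Finset.prod_ne_zero_iff.2 fun j _ => hA j
  have hP2 : ∀ n : ℕ, pochN q (q * y) n ≠ 0 := fun n =>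
    Finset.prod_ne_zero_iff.2 fun j _ => by
      have := hB j; intro h; apply this; linear_combination h
  -- recurrence for coefficients
  have hrec : ∀ n : ℕ, cJ q y (n + 1) * ((1 - q * q ^ n) * (1 - q * y * q ^ n))
      = -(q * q ^ n) * cJ q y n := by
    intro n
    unfold cJ
    rw [show pochN q q (n + 1) = pochN q q n * (1 - q * q ^ n) from Finset.prod_range_succ _ n,
      show pochN q (q * y) (n + 1) = pochN q (q * y) n * (1 - q * y * q ^ n) by
        rw [pochN, Finset.prod_range_succ, ← pochN],
      triangle_step n]
    have d1 := hP1 n; have d2 := hP2 n; have d3 := hA n; have d4 := hB n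
    have d5 : 1 - q * q ^ n * y ≠ 0 := by rw [show q * q ^ n * y = q * y * q ^ n by ring]; exact d4
    field_simp [d1, d2, d3, d4, d5]
    ring
  -- summability of the series at every point
  have hs : ∀ x : ℂ, Summable (fun n => cJ q y n * x ^ n) := by
    intro x
    set f : ℕ → ℂ := fun n => cJ q y n * x ^ n with hf
    have hstep : ∀ n : ℕ, f (n + 1)
        = f n * (-(q * q ^ n * x) / ((1 - q * q ^ n) * (1 - q * y * q ^ n))) := by
      intro n
      have h := hrec n
      have hAB : (1 - q * q ^ n) * (1 - q * y * q ^ n) ≠ 0 := mul_ne_zero (hA n) (hB n)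
      simp only [hf]
      rw [mul_div_assoc', eq_div_iff hAB]
      linear_combination (x ^ n * x) * h
    have htend : Filter.Tendsto
        (fun n : ℕ => ‖-(q * q ^ n * x) / ((1 - q * q ^ n) * (1 - q * y * q ^ n))‖)
        Filter.atTop (nhds 0) := by
      have hq : Filter.Tendsto (fun n : ℕ => (q : ℂ) ^ n) Filter.atTop (nhds 0) :=
        tendsto_pow_atTop_nhds_zero_of_norm_lt_one h1
      have hnum : Filter.Tendsto (fun n : ℕ => -(q * q ^ n * x)) Filter.atTop (nhds 0) := by
        have := (hq.const_mul q).mul_const x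
        simpa using this.neg
      have hden : Filter.Tendsto (fun n : ℕ => (1 - q * q ^ n) * (1 - q * y * q ^ n))
          Filter.atTop (nhds 1) := by
        have h1' : Filter.Tendsto (fun n : ℕ => (1 : ℂ) - q * q ^ n) Filter.atTop (nhds 1) := by
          have := (hq.const_mul q).const_sub (1 : ℂ)
          simpa using this
        have h2' : Filter.Tendsto (fun n : ℕ => (1 : ℂ) - q * y * q ^ n) Filter.atTop (nhds 1) := by
          have := (hq.const_mul (q * y)).const_sub (1 : ℂ)
          simpa using this
        simpa using h1'.mul h2'
      have : Filter.Tendsto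
          (fun n : ℕ => -(q * q ^ n * x) / ((1 - q * q ^ n) * (1 - q * y * q ^ n)))
          Filter.atTop (nhds 0) := by
        have := hnum.div hden one_ne_zero
        rw [zero_div] at this; exact this
      simpa using this.norm
    have hev : ∀ᶠ n in Filter.atTop, ‖f (n + 1)‖ ≤ (1 / 2 : ℝ) * ‖f n‖ := by
      filter_upwards [htend.eventually_lt_const (by norm_num : (0 : ℝ) < 1 / 2)] with n hn
      rw [hstep n, norm_mul]
      calc ‖f n‖ * ‖-(q * q ^ n * x) / ((1 - q * q ^ n) * (1 - q * y * q ^ n))‖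
          ≤ ‖f n‖ * (1 / 2) := mul_le_mul_of_nonneg_left hn.le (norm_nonneg _)
        _ = (1 / 2) * ‖f n‖ := by ring
    exact summable_of_ratio_norm_eventually_le (by norm_num) hev
  -- express Jq via cJ
  have hJ : ∀ x : ℂ, Jq q x y = pinf q (q * y) * ∑' n : ℕ, cJ q y n * x ^ n := by
    intro x
    unfold Jq
    congr 1
    exact tsum_congr fun n => by rw [cJ]; ring
  intro x
  -- the key identity for the power series S
  have hc0 : cJ q y 0 = 1 := by simp [cJ, pochN]
  have hsum1 := hs (q * x)
  have hsum2 := hs x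
  have hsum3 := hs (q⁻¹ * x)
  have hu : Summable (fun n => y * (cJ q y n * (q * x) ^ n)
      - (1 + y) * (cJ q y n * x ^ n) + cJ q y n * (q⁻¹ * x) ^ n) :=
    ((hsum1.mul_left y).sub (hsum2.mul_left (1 + y))).add hsum3
  have hterm : ∀ n : ℕ, y * (cJ q y (n + 1) * (q * x) ^ (n + 1))
      - (1 + y) * (cJ q y (n + 1) * x ^ (n + 1)) + cJ q y (n + 1) * (q⁻¹ * x) ^ (n + 1)
      = -(cJ q y n * x ^ n * x) := by
    intro n
    have h := hrec n
    have hqn : (q : ℂ) ^ n ≠ 0 := pow_ne_zero n hq0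
    rw [inv_mul_eq_div, div_pow]
    field_simp
    ring_nf
    ring_nf at h
    linear_combination (x ^ n * x) * h
  have hkey : y * (∑' n : ℕ, cJ q y n * (q * x) ^ n)
      - (1 + y) * (∑' n : ℕ, cJ q y n * x ^ n)
      + (∑' n : ℕ, cJ q y n * (q⁻¹ * x) ^ n)
      = -((∑' n : ℕ, cJ q y n * x ^ n) * x) := by
    have e1 : y * (∑' n : ℕ, cJ q y n * (q * x) ^ n)
        - (1 + y) * (∑' n : ℕ, cJ q y n * x ^ n)
        + (∑' n : ℕ, cJ q y n * (q⁻¹ * x) ^ n)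
        = ∑' n : ℕ, (y * (cJ q y n * (q * x) ^ n)
            - (1 + y) * (cJ q y n * x ^ n) + cJ q y n * (q⁻¹ * x) ^ n) := by
      rw [← tsum_mul_left, ← tsum_mul_left,
        ← Summable.tsum_sub (hsum1.mul_left y) (hsum2.mul_left (1 + y)),
        ← Summable.tsum_add ((hsum1.mul_left y).sub (hsum2.mul_left (1 + y))) hsum3]
    rw [e1, Summable.tsum_eq_zero_add hu]
    have h0' : y * (cJ q y 0 * (q * x) ^ 0) - (1 + y) * (cJ q y 0 * x ^ 0)
        + cJ q y 0 * (q⁻¹ * x) ^ 0 = 0 := by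
      simp [hc0]
    rw [h0', zero_add]
    calc (∑' n : ℕ, (y * (cJ q y (n + 1) * (q * x) ^ (n + 1))
          - (1 + y) * (cJ q y (n + 1) * x ^ (n + 1)) + cJ q y (n + 1) * (q⁻¹ * x) ^ (n + 1)))
        = ∑' n : ℕ, -(cJ q y n * x ^ n * x) := tsum_congr hterm
      _ = -((∑' n : ℕ, cJ q y n * x ^ n) * x) := by
          rw [tsum_neg, tsum_mul_right]
  rw [hJ (q * x), hJ x, hJ (q⁻¹ * x)]
  linear_combination pinf q (q * y) * hkey
end
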